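/- arXiv:1306.1797 — 3 statements merged into one kernel-verified Lean document; each statement's English description precedes it below -/
import Mathlib

section
/- For any nonnegative function ρ ∈ L¹(ℝ) with finite second moment, any λ > 0, and any φ ∈ H¹(ℝ), one has λ³ ∬_{ℝ²} ρ(λ(x−y)) (φ(x)−φ(y))² dx dy ≤ (∫_ℝ ρ(x)|x|² dx) (∫_ℝ |φ'(x)|² dx). -/
open MeasureTheory Real
open scoped ENNReal

/-- Cauchy–Schwarz + FTC pointwise bound. -/
lemma aux_cs (φ : ℝ → ℝ) (hφ_diff : Differentiable ℝ φ)
    (hφ'_L2 : MemLp (deriv φ) 2 (volume : Measure ℝ))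
    (x z : ℝ) (hz : 0 ≤ z) :
    ENNReal.ofReal ((φ x - φ (x - z)) ^ 2) ≤
      ENNReal.ofReal z * ∫⁻ t in Set.Ioc (x - z) x, ENNReal.ofReal ((deriv φ t) ^ 2) := by
  have hle : x - z ≤ x := by linarith
  have hmeas : Measurable (deriv φ) := measurable_deriv φ
  haveI : IsFiniteMeasure (volume.restrict (Set.Ioc (x - z) x)) := by
    constructor
    rw [Measure.restrict_apply_univ, Real.volume_Ioc]
    exact ENNReal.ofReal_lt_top
  have hint : IntegrableOn (deriv φ) (Set.Ioc (x - z) x) volume := by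
    have h2 : MemLp (deriv φ) 2 (volume.restrict (Set.Ioc (x - z) x)) := hφ'_L2.restrict _
    exact (h2.mono_exponent (by norm_num : (1 : ℝ≥0∞) ≤ 2)).integrable le_rfl
  have hii : IntervalIntegrable (deriv φ) volume (x - z) x :=
    (intervalIntegrable_iff_integrableOn_Ioc_of_le hle).mpr hint
  have hftc : φ x - φ (x - z) = ∫ t in Set.Ioc (x - z) x, deriv φ t := by
    rw [← intervalIntegral.integral_of_le hle]
    exact (intervalIntegral.integral_deriv_eq_sub (fun t _ => hφ_diff t) hii).symm
  set s := Set.Ioc (x - z) x with hs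
  set C := ∫⁻ t in s, ENNReal.ofReal ((deriv φ t) ^ 2) with hC
  set B := ∫⁻ t in s, ENNReal.ofReal |deriv φ t| with hB
  have habs : ENNReal.ofReal ((φ x - φ (x - z)) ^ 2) ≤ B ^ 2 := by
    have h1 : |φ x - φ (x - z)| ≤ ∫ t in s, |deriv φ t| := by
      rw [hftc]
      calc |∫ t in s, deriv φ t| ≤ ∫ t in s, |deriv φ t| := by
            simpa [Real.norm_eq_abs] using
              norm_integral_le_integral_norm (μ := volume.restrict s) (deriv φ)
      _ = _ := rfl
    have h2 : ENNReal.ofReal (∫ t in s, |deriv φ t|) = B := by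
      rw [hB]
      exact ofReal_integral_eq_lintegral_ofReal hint.abs
        (Filter.Eventually.of_forall fun t => abs_nonneg _)
    calc ENNReal.ofReal ((φ x - φ (x - z)) ^ 2)
        = ENNReal.ofReal (|φ x - φ (x - z)| ^ 2) := by rw [sq_abs]
      _ = ENNReal.ofReal |φ x - φ (x - z)| ^ 2 := by rw [ENNReal.ofReal_pow (abs_nonneg _)]
      _ ≤ ENNReal.ofReal (∫ t in s, |deriv φ t|) ^ 2 :=
          pow_le_pow_left' (ENNReal.ofReal_le_ofReal h1) 2
      _ = B ^ 2 := by rw [h2]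
  have hholder : B ≤ C ^ ((1:ℝ)/2) * (ENNReal.ofReal z) ^ ((1:ℝ)/2) := by
    have hpq : Real.HolderConjugate 2 2 := Real.HolderConjugate.two_two
    have hf : AEMeasurable (fun t => ENNReal.ofReal |deriv φ t|) (volume.restrict s) :=
      (hmeas.abs.ennreal_ofReal).aemeasurable
    have hg : AEMeasurable (fun _ : ℝ => (1:ℝ≥0∞)) (volume.restrict s) := aemeasurable_const
    have := ENNReal.lintegral_mul_le_Lp_mul_Lq (volume.restrict s) hpq hf hg
    simp only [Pi.mul_apply, mul_one, ENNReal.one_rpow] at this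
    have e1 : ∫⁻ t in s, ENNReal.ofReal |deriv φ t| ^ (2:ℝ) = C := by
      rw [hC]
      congr 1
      funext t
      rw [ENNReal.rpow_two, ← ENNReal.ofReal_pow (abs_nonneg _), sq_abs]
    have e2 : ∫⁻ _ in s, (1:ℝ≥0∞) = ENNReal.ofReal z := by
      rw [setLIntegral_one, hs, Real.volume_Ioc]
      ring_nf
    rw [e1, e2] at this
    exact this
  calc ENNReal.ofReal ((φ x - φ (x - z)) ^ 2) ≤ B ^ 2 := habs
    _ ≤ (C ^ ((1:ℝ)/2) * (ENNReal.ofReal z) ^ ((1:ℝ)/2)) ^ 2 := pow_le_pow_left' hholder 2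
    _ = C * ENNReal.ofReal z := by
        rw [mul_pow, ← ENNReal.rpow_natCast (C ^ ((1:ℝ)/2)) 2,
          ← ENNReal.rpow_natCast ((ENNReal.ofReal z) ^ ((1:ℝ)/2)) 2,
          ← ENNReal.rpow_mul, ← ENNReal.rpow_mul]
        norm_num
    _ = ENNReal.ofReal z * C := mul_comm _ _

/-- Translation estimate in `L²`, nonnegative shift. -/
lemma aux_translate_nonneg (φ : ℝ → ℝ) (hφ_diff : Differentiable ℝ φ)
    (hφ'_L2 : MemLp (deriv φ) 2 (volume : Measure ℝ)) (z : ℝ) (hz : 0 ≤ z) :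
    ∫⁻ x, ENNReal.ofReal ((φ x - φ (x - z)) ^ 2) ≤
      ENNReal.ofReal (z ^ 2) * ∫⁻ t, ENNReal.ofReal ((deriv φ t) ^ 2) := by
  have hmeas : Measurable (deriv φ) := measurable_deriv φ
  set h : ℝ → ℝ≥0∞ := fun t => ENNReal.ofReal ((deriv φ t) ^ 2) with hh
  have hhm : Measurable h := (hmeas.pow_const 2).ennreal_ofReal
  have key := aux_cs φ hφ_diff hφ'_L2
  have hswap : ∫⁻ x, ∫⁻ t, (Set.Ioc (x - z) x).indicator h t
      = ∫⁻ t, ∫⁻ x, (Set.Ioc (x - z) x).indicator h t := by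
    apply lintegral_lintegral_swap
    have hFset : MeasurableSet {p : ℝ × ℝ | p.1 - z < p.2 ∧ p.2 ≤ p.1} :=
      MeasurableSet.inter
        (measurableSet_lt (measurable_fst.sub measurable_const) measurable_snd)
        (measurableSet_le measurable_snd measurable_fst)
    have : (Function.uncurry fun x t => (Set.Ioc (x - z) x).indicator h t)
        = Set.indicator {p : ℝ × ℝ | p.1 - z < p.2 ∧ p.2 ≤ p.1} (fun p => h p.2) := by
      funext p
      simp [Function.uncurry, Set.indicator_apply, Set.mem_Ioc]
    rw [this]
    exact ((hhm.comp measurable_snd).indicator hFset).aemeasurable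
  have hinner : ∀ t : ℝ, ∫⁻ x, (Set.Ioc (x - z) x).indicator h t = h t * ENNReal.ofReal z := by
    intro t
    have : (fun x => (Set.Ioc (x - z) x).indicator h t)
        = (Set.Ico t (t + z)).indicator (fun _ => h t) := by
      funext x
      simp only [Set.indicator_apply, Set.mem_Ioc, Set.mem_Ico]
      congr 1
      simp only [eq_iff_iff]
      constructor
      · rintro ⟨h1, h2⟩; exact ⟨h2, by linarith⟩
      · rintro ⟨h1, h2⟩; exact ⟨by linarith, h1⟩
    rw [this, lintegral_indicator measurableSet_Ico, setLIntegral_const, Real.volume_Ico]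
    ring_nf
  calc ∫⁻ x, ENNReal.ofReal ((φ x - φ (x - z)) ^ 2)
      ≤ ∫⁻ x, ENNReal.ofReal z * ∫⁻ t in Set.Ioc (x - z) x, h t :=
        lintegral_mono fun x => key x z hz
    _ = ENNReal.ofReal z * ∫⁻ x, ∫⁻ t in Set.Ioc (x - z) x, h t :=
        lintegral_const_mul' _ _ ENNReal.ofReal_ne_top
    _ = ENNReal.ofReal z * ∫⁻ x, ∫⁻ t, (Set.Ioc (x - z) x).indicator h t := by
        congr 1; exact lintegral_congr fun x => (lintegral_indicator measurableSet_Ioc _).symm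
    _ = ENNReal.ofReal z * ∫⁻ t, ∫⁻ x, (Set.Ioc (x - z) x).indicator h t := by rw [hswap]
    _ = ENNReal.ofReal z * ∫⁻ t, h t * ENNReal.ofReal z := by
        congr 1; exact lintegral_congr hinner
    _ = ENNReal.ofReal z * ((∫⁻ t, h t) * ENNReal.ofReal z) := by
        rw [lintegral_mul_const _ hhm]
    _ = ENNReal.ofReal (z ^ 2) * ∫⁻ t, h t := by
        rw [sq, ENNReal.ofReal_mul hz]; ring

/-- Translation estimate in `L²`, arbitrary shift. -/
lemma aux_translate (φ : ℝ → ℝ) (hφ_diff : Differentiable ℝ φ)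
    (hφ'_L2 : MemLp (deriv φ) 2 (volume : Measure ℝ)) (z : ℝ) :
    ∫⁻ x, ENNReal.ofReal ((φ x - φ (x - z)) ^ 2) ≤
      ENNReal.ofReal (z ^ 2) * ∫⁻ t, ENNReal.ofReal ((deriv φ t) ^ 2) := by
  rcases le_or_gt 0 z with hz | hz
  · exact aux_translate_nonneg φ hφ_diff hφ'_L2 z hz
  · set w := -z with hw
    have hw0 : 0 ≤ w := by simp [hw]; linarith
    have hmain := aux_translate_nonneg φ hφ_diff hφ'_L2 w hw0
    have hshift : ∫⁻ x, ENNReal.ofReal ((φ x - φ (x - z)) ^ 2)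
        = ∫⁻ x, ENNReal.ofReal ((φ x - φ (x - w)) ^ 2) := by
      have : (fun x => ENNReal.ofReal ((φ x - φ (x - z)) ^ 2))
          = fun x => (fun y => ENNReal.ofReal ((φ y - φ (y - w)) ^ 2)) (x + w) := by
        funext x
        show _ = ENNReal.ofReal ((φ (x + w) - φ (x + w - w)) ^ 2)
        have e1 : x + w - w = x := by ring
        have e2 : x - z = x + w := by rw [hw]; ring
        rw [e1, e2]
        congr 1
        ring
      rw [this, lintegral_add_right_eq_self (fun y => ENNReal.ofReal ((φ y - φ (y - w)) ^ 2)) w]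
    have hsq : w ^ 2 = z ^ 2 := by rw [hw]; ring
    rw [hshift, ← hsq]
    exact hmain

/-- For any nonnegative `ρ ∈ L¹(ℝ)` with finite second moment, any `λ > 0`,
and any `φ ∈ H¹(ℝ)`, one has
`λ³ ∬ ρ(λ(x−y)) (φ(x)−φ(y))² dx dy ≤ (∫ ρ(x)|x|² dx) (∫ |φ'(x)|² dx)`. -/
theorem stmt0 (ρ φ : ℝ → ℝ) (hρ_nonneg : ∀ x, 0 ≤ ρ x)
    (hρ_int : Integrable ρ) (hρ_mom : Integrable (fun x => ρ x * x ^ 2))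
    (hφ_diff : Differentiable ℝ φ) (hφ_L2 : MemLp φ 2 (volume : Measure ℝ))
    (hφ'_L2 : MemLp (deriv φ) 2 (volume : Measure ℝ))
    (l : ℝ) (hl : 0 < l) :
    l ^ 3 * ∫ x : ℝ, ∫ y : ℝ, ρ (l * (x - y)) * (φ x - φ y) ^ 2 ≤
      (∫ x : ℝ, ρ x * |x| ^ 2) * ∫ x : ℝ, |deriv φ x| ^ 2 := by
  have hφm : Measurable φ := hφ_diff.continuous.measurable
  have hφ'm : Measurable (deriv φ) := measurable_deriv φ
  -- measurable nonnegative representative of ρ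
  set ρ₁ : ℝ → ℝ := fun x => max (hρ_int.1.mk ρ x) 0 with hρ₁def
  have hρ₁m : Measurable ρ₁ := hρ_int.1.measurable_mk.max measurable_const
  have hae : ρ =ᵐ[volume] ρ₁ := by
    filter_upwards [hρ_int.1.ae_eq_mk] with x hx
    rw [hρ₁def]
    simp only [← hx]
    exact (max_eq_left (hρ_nonneg x)).symm
  have hρ₁_nonneg : ∀ x, 0 ≤ ρ₁ x := fun x => le_max_right _ _
  -- quasi measure preserving maps
  have hqmul : Measure.QuasiMeasurePreserving (fun u : ℝ => l * u) volume volume := by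
    refine ⟨measurable_const_mul l, ?_⟩
    rw [Real.map_volume_mul_left hl.ne']
    exact Measure.smul_absolutelyContinuous
  have hqx : ∀ x : ℝ, Measure.QuasiMeasurePreserving (fun y : ℝ => l * (x - y))
      volume volume := fun x =>
    hqmul.comp (Measure.measurePreserving_sub_left volume x).quasiMeasurePreserving
  -- replace ρ by ρ₁ in the LHS
  have hcongr : (fun x => ∫ y, ρ (l * (x - y)) * (φ x - φ y) ^ 2)
      = fun x => ∫ y, ρ₁ (l * (x - y)) * (φ x - φ y) ^ 2 := by
    funext x
    refine integral_congr_ae ?_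
    filter_upwards [(hqx x).ae_eq_comp hae] with y hy
    simp only [Function.comp] at hy
    rw [hy]
  -- ENNReal-valued versions
  set F : ℝ → ℝ → ℝ≥0∞ := fun x y => ENNReal.ofReal (ρ₁ (l * (x - y)) * (φ x - φ y) ^ 2)
    with hFdef
  have hFm : Measurable (Function.uncurry F) := by
    apply Measurable.ennreal_ofReal
    exact ((hρ₁m.comp ((measurable_fst.sub measurable_snd).const_mul l))).mul
      (((hφm.comp measurable_fst).sub (hφm.comp measurable_snd)).pow_const 2)
  set J : ℝ → ℝ≥0∞ := fun x => ∫⁻ y, F x y with hJdef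
  have hJm : Measurable J := hFm.lintegral_prod_right'
  set K := ∫⁻ x, J x with hKdef
  set T := ∫⁻ t, ENNReal.ofReal ((deriv φ t) ^ 2) with hTdef
  set Dφ := ∫ t, (deriv φ t) ^ 2 with hDdef
  have hD_nonneg : 0 ≤ Dφ := integral_nonneg fun t => sq_nonneg _
  have hT : T = ENNReal.ofReal Dφ := by
    rw [hTdef, hDdef]
    exact (ofReal_integral_eq_lintegral_ofReal hφ'_L2.integrable_sq
      (Filter.Eventually.of_forall fun t => sq_nonneg _)).symm
  -- inner integrals
  have hinner_eq : ∀ x, (∫ y, ρ₁ (l * (x - y)) * (φ x - φ y) ^ 2) = (J x).toReal := by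
    intro x
    rw [hJdef]
    apply integral_eq_lintegral_of_nonneg_ae
    · exact Filter.Eventually.of_forall fun y => mul_nonneg (hρ₁_nonneg _) (sq_nonneg _)
    · exact ((hρ₁m.comp ((measurable_const.sub measurable_id').const_mul l)).mul
        ((measurable_const.sub hφm).pow_const 2)).aestronglyMeasurable
  -- change of variables in the inner lintegral
  set G : ℝ → ℝ → ℝ≥0∞ := fun x z => ENNReal.ofReal (ρ₁ (l * z) * (φ x - φ (x - z)) ^ 2)
    with hGdef
  have hGm : Measurable (Function.uncurry G) := by
    apply Measurable.ennreal_ofReal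
    exact (hρ₁m.comp (measurable_snd.const_mul l)).mul
      (((hφm.comp measurable_fst).sub (hφm.comp (measurable_fst.sub measurable_snd))).pow_const 2)
  have hJ_eq : ∀ x, J x = ∫⁻ z, G x z := by
    intro x
    have hFxm : Measurable (F x) := by
      apply Measurable.ennreal_ofReal
      exact (hρ₁m.comp ((measurable_const.sub measurable_id').const_mul l)).mul
        ((measurable_const.sub hφm).pow_const 2)
    have h0 := (Measure.measurePreserving_sub_left volume x).lintegral_comp hFxm
    refine Eq.trans h0.symm (lintegral_congr fun z => ?_)
    simp only [hFdef, hGdef, sub_sub_cancel]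
  -- swap
  have hswap : K = ∫⁻ z, ∫⁻ x, G x z := by
    rw [hKdef]
    rw [lintegral_congr hJ_eq]
    exact lintegral_lintegral_swap hGm.aemeasurable
  -- bound for fixed z
  have hzbound : ∀ z, ∫⁻ x, G x z ≤ ENNReal.ofReal (ρ₁ (l * z) * z ^ 2) * T := by
    intro z
    have h1 : ∫⁻ x, G x z
        = ENNReal.ofReal (ρ₁ (l * z)) * ∫⁻ x, ENNReal.ofReal ((φ x - φ (x - z)) ^ 2) := by
      rw [← lintegral_const_mul' _ _ ENNReal.ofReal_ne_top]
      refine lintegral_congr fun x => ?_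
      show ENNReal.ofReal (ρ₁ (l * z) * (φ x - φ (x - z)) ^ 2) = _
      rw [ENNReal.ofReal_mul (hρ₁_nonneg _)]
    rw [h1, ENNReal.ofReal_mul (hρ₁_nonneg _), mul_assoc]
    exact mul_le_mul_right (aux_translate φ hφ_diff hφ'_L2 z) _
  set S := ∫⁻ z, ENNReal.ofReal (ρ₁ (l * z) * z ^ 2) with hSdef
  have hmS : Measurable fun z : ℝ => ENNReal.ofReal (ρ₁ (l * z) * z ^ 2) := by
    have h1 : Measurable fun z : ℝ => ρ₁ (l * z) := hρ₁m.comp (measurable_id'.const_mul l)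
    exact (h1.mul (measurable_id'.pow_const 2)).ennreal_ofReal
  have hKle : K ≤ S * T := by
    rw [hswap]
    exact (lintegral_mono hzbound).trans_eq (lintegral_mul_const T hmS)
  -- scaling
  set N := ∫⁻ u, ENNReal.ofReal (ρ₁ u * u ^ 2) with hNdef
  have hscale : ENNReal.ofReal (l ^ 3) * S = N := by
    have hqm : Measurable fun u : ℝ => ENNReal.ofReal (ρ₁ u * u ^ 2) :=
      (hρ₁m.mul (measurable_id'.pow_const 2)).ennreal_ofReal
    have hmap := lintegral_map (μ := (volume : Measure ℝ)) hqm (measurable_const_mul l)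
    rw [Real.map_volume_mul_left hl.ne', lintegral_smul_measure] at hmap
    have hmap2 : ∫⁻ z : ℝ, ENNReal.ofReal (ρ₁ (l * z) * (l * z) ^ 2)
        = ENNReal.ofReal l⁻¹ * N := by
      rw [hNdef]
      simpa [abs_of_pos (inv_pos.mpr hl)] using hmap.symm
    have h1 : ENNReal.ofReal (l ^ 3) * S
        = ∫⁻ z, ENNReal.ofReal l * ENNReal.ofReal (ρ₁ (l * z) * (l * z) ^ 2) := by
      rw [hSdef, ← lintegral_const_mul' _ _ ENNReal.ofReal_ne_top]
      refine lintegral_congr fun z => ?_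
      rw [← ENNReal.ofReal_mul (by positivity), ← ENNReal.ofReal_mul hl.le]
      congr 1
      ring
    rw [h1, lintegral_const_mul' _ _ ENNReal.ofReal_ne_top, hmap2, ← mul_assoc,
      ← ENNReal.ofReal_mul hl.le, mul_inv_cancel₀ hl.ne',
      ENNReal.ofReal_one, one_mul]
  -- N = ofReal M₁
  set M₁ := ∫ u, ρ₁ u * u ^ 2 with hM₁def
  have hM₁_nonneg : 0 ≤ M₁ := integral_nonneg fun u => mul_nonneg (hρ₁_nonneg _) (sq_nonneg _)
  have hmom₁ : Integrable (fun u => ρ₁ u * u ^ 2) := by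
    refine hρ_mom.congr ?_
    filter_upwards [hae] with u hu
    rw [hu]
  have hN : N = ENNReal.ofReal M₁ :=
    (ofReal_integral_eq_lintegral_ofReal hmom₁
      (Filter.Eventually.of_forall fun u => mul_nonneg (hρ₁_nonneg _) (sq_nonneg _))).symm
  -- the key bound
  have hKbound : ENNReal.ofReal (l ^ 3) * K ≤ ENNReal.ofReal M₁ * ENNReal.ofReal Dφ := by
    calc ENNReal.ofReal (l ^ 3) * K ≤ ENNReal.ofReal (l ^ 3) * (S * T) :=
          mul_le_mul_right hKle _
      _ = (ENNReal.ofReal (l ^ 3) * S) * T := by ring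
      _ = N * T := by rw [hscale]
      _ = ENNReal.ofReal M₁ * ENNReal.ofReal Dφ := by rw [hN, hT]
  have hK_ne_top : K ≠ ⊤ := by
    intro h
    rw [h, ENNReal.mul_top (by
      simp only [ne_eq, ENNReal.ofReal_eq_zero, not_le]
      positivity)] at hKbound
    exact (ENNReal.mul_ne_top ENNReal.ofReal_ne_top ENNReal.ofReal_ne_top)
      (top_le_iff.mp hKbound)
  -- outer integral bound
  have houter : ∫ x, (J x).toReal ≤ K.toReal := by
    have h1 : ∫ x, (J x).toReal = (∫⁻ x, ENNReal.ofReal ((J x).toReal)).toReal := by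
      apply integral_eq_lintegral_of_nonneg_ae
      · exact Filter.Eventually.of_forall fun x => ENNReal.toReal_nonneg
      · exact (ENNReal.measurable_toReal.comp hJm).aestronglyMeasurable
    rw [h1]
    exact ENNReal.toReal_mono hK_ne_top
      (lintegral_mono fun x => ENNReal.ofReal_toReal_le)
  -- RHS identities
  have hRHS1 : ∫ x : ℝ, ρ x * |x| ^ 2 = M₁ := by
    rw [hM₁def]
    refine integral_congr_ae ?_
    filter_upwards [hae] with x hx
    rw [hx, sq_abs]
  have hRHS2 : ∫ x : ℝ, |deriv φ x| ^ 2 = Dφ := by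
    rw [hDdef]
    refine integral_congr_ae (Filter.Eventually.of_forall fun x => ?_)
    show |deriv φ x| ^ 2 = deriv φ x ^ 2
    rw [sq_abs]
  -- final assembly
  rw [hcongr, hRHS1, hRHS2]
  have h2 : (fun x => ∫ y, ρ₁ (l * (x - y)) * (φ x - φ y) ^ 2) = fun x => (J x).toReal := by
    funext x; exact hinner_eq x
  rw [h2]
  calc l ^ 3 * ∫ x, (J x).toReal ≤ l ^ 3 * K.toReal :=
        mul_le_mul_of_nonneg_left houter (by positivity)
    _ = (ENNReal.ofReal (l ^ 3) * K).toReal := by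
        rw [ENNReal.toReal_mul, ENNReal.toReal_ofReal (by positivity)]
    _ ≤ (ENNReal.ofReal M₁ * ENNReal.ofReal Dφ).toReal :=
        ENNReal.toReal_mono (ENNReal.mul_ne_top ENNReal.ofReal_ne_top ENNReal.ofReal_ne_top)
          hKbound
    _ = M₁ * Dφ := by
        rw [ENNReal.toReal_mul, ENNReal.toReal_ofReal hM₁_nonneg,
          ENNReal.toReal_ofReal hD_nonneg]
end

section
/- Let ρ ∈ L¹(ℝ) be nonnegative with finite second moment, ρ not identically zero, and for n ≥ 1 set ρ_n(x) = n ρ(n x). For any χ ∈ W^{1,∞}(ℝ) there is a constant C(χ) > 0 such that for every positive integer n and every u ∈ L²(ℝ): n² ∬_{ℝ²} ρ_n(x−y) ((χu)(x) − (χu)(y))² dx dy ≤ C(χ) n² ∬_{ℝ²} ρ_n(x−y)(u(x) − u(y))² dx dy + C(χ) (∫_ℝ ρ(z) z² dz) ‖u‖²_{L²(ℝ)}. -/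
open MeasureTheory Real
open scoped ENNReal

private lemma qmp_aux {c : ℝ} (hc : c ≠ 0) (x : ℝ) :
    Measure.QuasiMeasurePreserving (fun y : ℝ => c * (x - y)) volume volume := by
  have h1 : MeasurePreserving (fun y : ℝ => x - y) (volume : Measure ℝ) volume :=
    Measure.measurePreserving_sub_left volume x
  have h2 : Measure.QuasiMeasurePreserving (fun z : ℝ => c * z)
      (volume : Measure ℝ) volume := by
    refine ⟨measurable_const_mul c, ?_⟩
    rw [show (fun z : ℝ => c * z) = fun z : ℝ => c * z from rfl,
      Real.map_volume_mul_left hc]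
    exact Measure.smul_absolutelyContinuous
  exact h2.comp h1.quasiMeasurePreserving

private lemma double_congr {ρ ρ' u u' : ℝ → ℝ} {c : ℝ} (hc : c ≠ 0)
    (hρ : ρ =ᵐ[volume] ρ') (hu : u =ᵐ[volume] u') (F : ℝ → ℝ → ℝ) :
    (∫ x : ℝ, ∫ y : ℝ, c * ρ (c * (x - y)) * (F x (u x) - F y (u y)) ^ 2) =
    ∫ x : ℝ, ∫ y : ℝ, c * ρ' (c * (x - y)) * (F x (u' x) - F y (u' y)) ^ 2 := by
  refine integral_congr_ae ?_
  filter_upwards [hu] with x hx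
  refine integral_congr_ae ?_
  filter_upwards [(qmp_aux hc x).ae_eq hρ, hu] with y h1 h2
  simp only [Function.comp] at h1
  rw [hx, h1, h2]

private lemma sq_eLpNorm {u : ℝ → ℝ} (hu : MemLp u 2 (volume : Measure ℝ)) :
    (eLpNorm u 2 (volume : Measure ℝ)).toReal ^ 2 = ∫ x, u x ^ 2 := by
  rw [hu.eLpNorm_eq_integral_rpow_norm two_ne_zero ENNReal.ofNat_ne_top]
  have h0 : (0:ℝ) ≤ ∫ a, ‖u a‖ ^ (2:ℝ≥0∞).toReal := by
    apply integral_nonneg; intro a; positivity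
  rw [ENNReal.toReal_ofReal (by positivity)]
  have : ((∫ a, ‖u a‖ ^ (2:ℝ≥0∞).toReal) ^ (2:ℝ≥0∞).toReal⁻¹) ^ (2:ℕ)
      = ∫ a, ‖u a‖ ^ (2:ℝ≥0∞).toReal := by
    rw [← Real.rpow_natCast (((∫ a, ‖u a‖ ^ (2:ℝ≥0∞).toReal) ^ (2:ℝ≥0∞).toReal⁻¹)) 2,
      ← Real.rpow_mul h0]
    norm_num
  rw [this]
  apply integral_congr_ae
  filter_upwards with a
  rw [show ((2:ℝ≥0∞)).toReal = ((2:ℕ):ℝ) by norm_num, Real.rpow_natCast]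
  simp [sq_abs]

private lemma ptwise_aux {B Kc χx χy a b x y : ℝ} (hx : |χx| ≤ B) (hl : |χx - χy| ≤ Kc * |x - y|) :
    (χx * a - χy * b) ^ 2 ≤ 2 * B ^ 2 * (a - b) ^ 2 + 2 * Kc ^ 2 * (x - y) ^ 2 * b ^ 2 := by
  have h1 : χx ^ 2 ≤ B ^ 2 := by
    have := abs_nonneg χx
    nlinarith [sq_abs χx]
  have h2 : (χx - χy) ^ 2 ≤ Kc ^ 2 * (x - y) ^ 2 := by
    have h3 := abs_nonneg (χx - χy)
    nlinarith [sq_abs (χx - χy), sq_abs (x - y)]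
  nlinarith [sq_nonneg (χx * (a - b) - (χx - χy) * b), sq_nonneg (a - b), sq_nonneg b,
    mul_le_mul_of_nonneg_right h1 (sq_nonneg (a - b)),
    mul_le_mul_of_nonneg_right h2 (sq_nonneg b)]

/-- localization estimate for the nonlocal quadratic form. -/
theorem stmt1 (ρ : ℝ → ℝ) (hρ_nonneg : ∀ x, 0 ≤ ρ x) (hρ_int : Integrable ρ)
    (hρ_mom : Integrable (fun z => ρ z * z ^ 2)) (hρ_ne : ρ ≠ 0)
    (χ : ℝ → ℝ) (K : NNReal) (hχ_lip : LipschitzWith K χ)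
    (hχ_bdd : ∃ B, ∀ x, |χ x| ≤ B) :
    ∃ C > 0, ∀ n : ℕ, 0 < n → ∀ u : ℝ → ℝ, MemLp u 2 (volume : Measure ℝ) →
      (n : ℝ) ^ 2 * ∫ x : ℝ, ∫ y : ℝ,
          (n : ℝ) * ρ ((n : ℝ) * (x - y)) * (χ x * u x - χ y * u y) ^ 2 ≤
        C * (n : ℝ) ^ 2 * (∫ x : ℝ, ∫ y : ℝ,
            (n : ℝ) * ρ ((n : ℝ) * (x - y)) * (u x - u y) ^ 2) +
        C * (∫ z : ℝ, ρ z * z ^ 2) * (eLpNorm u 2 (volume : Measure ℝ)).toReal ^ 2 := by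
  classical
  obtain ⟨B, hB⟩ := hχ_bdd
  have hB0 : 0 ≤ B := (abs_nonneg _).trans (hB 0)
  refine ⟨2 * B ^ 2 + 2 * (K : ℝ) ^ 2 + 1, by positivity, ?_⟩
  intro n hn u hu
  set c : ℝ := (n : ℝ) with hcdef
  have hc0 : (0:ℝ) < c := by rw [hcdef]; exact_mod_cast hn
  have hcne : c ≠ 0 := ne_of_gt hc0
  -- measurable representatives
  set ρ' : ℝ → ℝ := fun z => max (hρ_int.1.mk ρ z) 0 with hρ'def
  have hρ'meas : Measurable ρ' :=
    (hρ_int.1.stronglyMeasurable_mk.measurable.max measurable_const)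
  have hρ'eq : ρ =ᵐ[volume] ρ' := by
    filter_upwards [hρ_int.1.ae_eq_mk] with z hz
    rw [hρ'def]; simp only [← hz]; exact (max_eq_left (hρ_nonneg z)).symm
  have hρ'nonneg : ∀ z, 0 ≤ ρ' z := fun z => le_max_right _ _
  have hρ'int : Integrable ρ' := hρ_int.congr hρ'eq
  have hρ'mom : Integrable (fun z => ρ' z * z ^ 2) :=
    hρ_mom.congr (hρ'eq.mono fun z hz => by dsimp only; rw [hz])
  set u' : ℝ → ℝ := hu.1.mk u with hu'def
  have hu'meas : Measurable u' := hu.1.stronglyMeasurable_mk.measurable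
  have hu'eq : u =ᵐ[volume] u' := hu.1.ae_eq_mk
  have hu'2 : MemLp u' 2 (volume : Measure ℝ) := hu.ae_eq hu'eq
  have hu'sq : Integrable (fun x => u' x ^ 2) := hu'2.integrable_sq
  have hχmeas : Measurable χ := hχ_lip.continuous.measurable
  -- rewrite the goal using the representatives
  have hMeq : (∫ z : ℝ, ρ z * z ^ 2) = ∫ z : ℝ, ρ' z * z ^ 2 :=
    integral_congr_ae (hρ'eq.mono fun z hz => by dsimp only; rw [hz])
  rw [double_congr hcne hρ'eq hu'eq (fun x v => χ x * v),
    double_congr hcne hρ'eq hu'eq (fun _ v => v), hMeq,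
    eLpNorm_congr_ae hu'eq]
  -- basic measurable maps
  have hdmeas : Measurable (fun p : ℝ × ℝ => c * (p.1 - p.2)) :=
    (measurable_fst.sub measurable_snd).const_mul c
  set ν : Measure (ℝ × ℝ) := (volume : Measure ℝ).prod volume with hνdef
  have hT : MeasurePreserving (fun p : ℝ × ℝ => (p.1 - p.2, p.2)) ν ν :=
    measurePreserving_sub_prod volume volume
  -- integrability facts
  have hInt1 : Integrable (fun p : ℝ × ℝ => ρ' (c * (p.1 - p.2)) * u' p.2 ^ 2) ν := by
    have hbase : Integrable (fun q : ℝ × ℝ => ρ' (c * q.1) * u' q.2 ^ 2) ν :=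
      (hρ'int.comp_mul_left' hcne).mul_prod hu'sq
    exact (hT.integrable_comp hbase.1).2 hbase
  have hInt2 : Integrable (fun p : ℝ × ℝ => ρ' (c * (p.1 - p.2)) * u' p.1 ^ 2) ν := by
    have hS : MeasurePreserving (fun p : ℝ × ℝ => (p.1, p.2 - p.1)) ν ν :=
      measurePreserving_prod_sub volume volume
    have hbase : Integrable (fun q : ℝ × ℝ => u' q.1 ^ 2 * ρ' (-c * q.2)) ν :=
      hu'sq.mul_prod (hρ'int.comp_mul_left' (neg_ne_zero.mpr hcne))
    have h2 : Integrable (fun p : ℝ × ℝ => u' p.1 ^ 2 * ρ' (-c * (p.2 - p.1))) ν :=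
      (hS.integrable_comp hbase.1).2 hbase
    have heq : (fun p : ℝ × ℝ => u' p.1 ^ 2 * ρ' (-c * (p.2 - p.1)))
        = fun p : ℝ × ℝ => ρ' (c * (p.1 - p.2)) * u' p.1 ^ 2 := by
      funext p
      rw [show -c * (p.2 - p.1) = c * (p.1 - p.2) by ring, mul_comm]
    rwa [heq] at h2
  have hGint : Integrable (fun s : ℝ => ρ' (c * s) * s ^ 2) := by
    have h1 : Integrable (fun s : ℝ => ρ' (c * s) * (c * s) ^ 2) :=
      hρ'mom.comp_mul_left' hcne
    have h2 := h1.const_mul ((c ^ 2)⁻¹)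
    have heq : (fun s : ℝ => (c ^ 2)⁻¹ * (ρ' (c * s) * (c * s) ^ 2))
        = fun s : ℝ => ρ' (c * s) * s ^ 2 := by
      funext s; field_simp
    rwa [heq] at h2
  have hInt3 : Integrable
      (fun p : ℝ × ℝ => ρ' (c * (p.1 - p.2)) * (p.1 - p.2) ^ 2 * u' p.2 ^ 2) ν := by
    have hbase : Integrable (fun q : ℝ × ℝ => ρ' (c * q.1) * q.1 ^ 2 * u' q.2 ^ 2) ν :=
      hGint.mul_prod hu'sq
    exact (hT.integrable_comp hbase.1).2 hbase
  -- the main integrands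
  set Jf : ℝ × ℝ → ℝ := fun p => c * ρ' (c * (p.1 - p.2)) * (u' p.1 - u' p.2) ^ 2 with hJfdef
  set If : ℝ × ℝ → ℝ :=
    fun p => c * ρ' (c * (p.1 - p.2)) * (χ p.1 * u' p.1 - χ p.2 * u' p.2) ^ 2 with hIfdef
  set K0 : ℝ × ℝ → ℝ :=
    fun p => ρ' (c * (p.1 - p.2)) * (p.1 - p.2) ^ 2 * u' p.2 ^ 2 with hK0def
  have hJmeas : Measurable Jf :=
    ((measurable_const.mul (hρ'meas.comp hdmeas)).mul
      (((hu'meas.comp measurable_fst).sub (hu'meas.comp measurable_snd)).pow_const 2))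
  have hImeas : Measurable If :=
    ((measurable_const.mul (hρ'meas.comp hdmeas)).mul
      ((((hχmeas.comp measurable_fst).mul (hu'meas.comp measurable_fst)).sub
        ((hχmeas.comp measurable_snd).mul (hu'meas.comp measurable_snd))).pow_const 2))
  have hJint : Integrable Jf ν := by
    refine Integrable.mono' (((hInt2.add hInt1).const_mul (2 * c)))
      hJmeas.aestronglyMeasurable ?_
    filter_upwards with p
    have h1 : 0 ≤ Jf p := by
      have := hρ'nonneg (c * (p.1 - p.2)); positivity
    rw [Real.norm_eq_abs, abs_of_nonneg h1]
    have := hρ'nonneg (c * (p.1 - p.2))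
    simp only [hJfdef, Pi.add_apply]
    nlinarith [mul_nonneg (mul_nonneg hc0.le this) (sq_nonneg (u' p.1 + u' p.2))]
  have hptwise : ∀ p : ℝ × ℝ,
      If p ≤ 2 * B ^ 2 * Jf p + 2 * (K : ℝ) ^ 2 * (c * K0 p) := by
    intro p
    have hl : |χ p.1 - χ p.2| ≤ (K : ℝ) * |p.1 - p.2| := by
      have := hχ_lip.dist_le_mul p.1 p.2
      simpa [Real.dist_eq] using this
    have halg := ptwise_aux (hB p.1) hl (a := u' p.1) (b := u' p.2)
    have hr : 0 ≤ c * ρ' (c * (p.1 - p.2)) :=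
      mul_nonneg (le_of_lt hc0) (hρ'nonneg _)
    have := mul_le_mul_of_nonneg_left halg hr
    calc If p = c * ρ' (c * (p.1 - p.2)) * (χ p.1 * u' p.1 - χ p.2 * u' p.2) ^ 2 := rfl
      _ ≤ c * ρ' (c * (p.1 - p.2)) * (2 * B ^ 2 * (u' p.1 - u' p.2) ^ 2
          + 2 * (K : ℝ) ^ 2 * (p.1 - p.2) ^ 2 * u' p.2 ^ 2) := this
      _ = 2 * B ^ 2 * Jf p + 2 * (K : ℝ) ^ 2 * (c * K0 p) := by
          simp only [hJfdef, hK0def]; ring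
  have hIint : Integrable If ν := by
    refine Integrable.mono' ((hJint.const_mul (2 * B ^ 2)).add
      ((hInt3.const_mul c).const_mul (2 * (K : ℝ) ^ 2)))
      hImeas.aestronglyMeasurable ?_
    filter_upwards with p
    have h1 : 0 ≤ If p := by
      have := hρ'nonneg (c * (p.1 - p.2)); positivity
    rw [Real.norm_eq_abs, abs_of_nonneg h1]
    exact hptwise p
  -- pass to product integrals
  have hIiter : (∫ x : ℝ, ∫ y : ℝ,
      c * ρ' (c * (x - y)) * (χ x * u' x - χ y * u' y) ^ 2) = ∫ p, If p ∂ν :=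
    integral_integral hIint
  have hJiter : (∫ x : ℝ, ∫ y : ℝ,
      c * ρ' (c * (x - y)) * (u' x - u' y) ^ 2) = ∫ p, Jf p ∂ν :=
    integral_integral hJint
  -- value of the K-term
  have hKval : (∫ p, K0 p ∂ν)
      = (c ^ 2)⁻¹ * (c⁻¹ * (∫ z, ρ' z * z ^ 2)) * ∫ x, u' x ^ 2 := by
    have hbasemeas : Measurable (fun q : ℝ × ℝ => ρ' (c * q.1) * q.1 ^ 2 * u' q.2 ^ 2) :=
      (((hρ'meas.comp (measurable_fst.const_mul c)).mul
        (measurable_fst.pow_const 2)).mul ((hu'meas.comp measurable_snd).pow_const 2))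
    have h1 : (∫ p, K0 p ∂ν)
        = ∫ q, ρ' (c * q.1) * q.1 ^ 2 * u' q.2 ^ 2 ∂ν := by
      have := integral_map (f := fun q : ℝ × ℝ => ρ' (c * q.1) * q.1 ^ 2 * u' q.2 ^ 2)
        hT.measurable.aemeasurable
        (by rw [hT.map_eq]; exact hbasemeas.aestronglyMeasurable)
      rw [hT.map_eq] at this
      exact this.symm
    rw [h1]
    have h2 : (∫ q : ℝ × ℝ, ρ' (c * q.1) * q.1 ^ 2 * u' q.2 ^ 2 ∂ν)
        = (∫ s : ℝ, ρ' (c * s) * s ^ 2) * ∫ x, u' x ^ 2 := by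
      exact integral_prod_mul (fun s : ℝ => ρ' (c * s) * s ^ 2) (fun x : ℝ => u' x ^ 2)
    rw [h2]
    have h3 : (∫ s : ℝ, ρ' (c * s) * s ^ 2)
        = (c ^ 2)⁻¹ * (c⁻¹ * ∫ z, ρ' z * z ^ 2) := by
      have heq : (fun s : ℝ => ρ' (c * s) * s ^ 2)
          = fun s : ℝ => (c ^ 2)⁻¹ * (ρ' (c * s) * (c * s) ^ 2) := by
        funext s; field_simp
      rw [heq]
      rw [integral_const_mul]
      rw [Measure.integral_comp_mul_left (fun z : ℝ => ρ' z * z ^ 2) c]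
      rw [smul_eq_mul, abs_of_pos (inv_pos.mpr hc0)]
    rw [h3]
  -- main comparison on the product space
  have hmain : (∫ p, If p ∂ν) ≤ 2 * B ^ 2 * (∫ p, Jf p ∂ν)
      + 2 * (K : ℝ) ^ 2 * (c * ∫ p, K0 p ∂ν) := by
    have h1 : (∫ p, If p ∂ν)
        ≤ ∫ p, (2 * B ^ 2 * Jf p + 2 * (K : ℝ) ^ 2 * (c * K0 p)) ∂ν := by
      refine integral_mono hIint ((hJint.const_mul _).add
        (((hInt3.const_mul c).const_mul _))) ?_
      exact hptwise
    calc (∫ p, If p ∂ν) ≤ ∫ p, (2 * B ^ 2 * Jf p + 2 * (K : ℝ) ^ 2 * (c * K0 p)) ∂ν := h1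
      _ = 2 * B ^ 2 * (∫ p, Jf p ∂ν) + 2 * (K : ℝ) ^ 2 * (c * ∫ p, K0 p ∂ν) := by
        rw [integral_add ((hJint.const_mul _)) (((hInt3.const_mul c).const_mul _)),
          integral_const_mul, integral_const_mul, integral_const_mul]
  -- nonnegativity facts
  have hJnn : 0 ≤ ∫ p, Jf p ∂ν := by
    apply integral_nonneg; intro p
    have := hρ'nonneg (c * (p.1 - p.2)); positivity
  have hMnn : 0 ≤ ∫ z, ρ' z * z ^ 2 := by
    apply integral_nonneg; intro z
    have := hρ'nonneg z; positivity
  have hUnn : 0 ≤ ∫ x, u' x ^ 2 := by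
    apply integral_nonneg; intro x; positivity
  -- finish
  rw [hIiter, hJiter, sq_eLpNorm hu'2]
  rw [hKval] at hmain
  have hn2 : c ^ 2 * (c * ((c ^ 2)⁻¹ * (c⁻¹ * (∫ z, ρ' z * z ^ 2)) * ∫ x, u' x ^ 2))
      = (∫ z, ρ' z * z ^ 2) * ∫ x, u' x ^ 2 := by
    field_simp
  nlinarith [mul_le_mul_of_nonneg_left hmain (sq_nonneg c),
    mul_nonneg hMnn hUnn, mul_nonneg (sq_nonneg c) hJnn,
    mul_nonneg (mul_nonneg (le_of_lt hc0) (le_of_lt hc0)) hJnn]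
end

section
/- Let J ∈ L¹(ℝ) be nonnegative, even, with mass one, and p ≥ 2. For any nonnegative u ∈ L²(ℝ) ∩ L^p(ℝ), ∫_ℝ (J∗u − u)(x) u(x)^{p−1} dx ≤ −(2(p−1)/p²) ∫_ℝ ∫_ℝ J(x−y) (u(x)^{p/2} − u(y)^{p/2})² dx dy. -/
open MeasureTheory Real
open scoped ENNReal NNReal

section AuxStmt13

private lemma cs_rpow13 {b a r : ℝ} (hb : 0 ≤ b) (hba : b ≤ a) (hr : 0 ≤ r) :
    ((a ^ (r+1) - b ^ (r+1)) / (r+1)) ^ 2 ≤ (a - b) * ((a ^ (2*r+1) - b ^ (2*r+1)) / (2*r+1)) := by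
  set μ : Measure ℝ := volume.restrict (Set.Ioc b a) with hμ
  haveI : IsFiniteMeasure μ := ⟨by
    rw [hμ, Measure.restrict_apply_univ, Real.volume_Ioc]; exact ENNReal.ofReal_lt_top⟩
  have hmeas : AEStronglyMeasurable (fun t : ℝ => t ^ r) μ :=
    (measurable_id.pow_const r).aestronglyMeasurable
  have haept : ∀ᵐ t ∂μ, t ∈ Set.Ioc b a := ae_restrict_mem measurableSet_Ioc
  have hfLp : MemLp (fun t : ℝ => t ^ r) (ENNReal.ofReal 2) μ := by
    refine MemLp.of_bound hmeas (a ^ r) ?_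
    filter_upwards [haept] with t ht
    rw [Real.norm_of_nonneg (Real.rpow_nonneg (le_trans hb ht.1.le) r)]
    exact Real.rpow_le_rpow (le_trans hb ht.1.le) ht.2 hr
  have h1Lp : MemLp (fun _ : ℝ => (1:ℝ)) (ENNReal.ofReal 2) μ := memLp_const 1
  have hconj : (2:ℝ).HolderConjugate 2 := Real.HolderConjugate.two_two
  have hH := integral_mul_le_Lp_mul_Lq_of_nonneg hconj
    (by filter_upwards [haept] with t ht; exact Real.rpow_nonneg (le_trans hb ht.1.le) r)
    (ae_of_all μ fun _ => zero_le_one) hfLp h1Lp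
  simp only [mul_one, Real.one_rpow] at hH
  have hsq : ∫ t, (t ^ r) ^ (2:ℝ) ∂μ = ∫ t, t ^ (2*r) ∂μ := by
    refine integral_congr_ae ?_
    filter_upwards [haept] with t ht
    rw [← Real.rpow_mul (le_trans hb ht.1.le), mul_comm]
  rw [hsq] at hH
  have hI1 : ∫ t, t ^ r ∂μ = (a ^ (r+1) - b ^ (r+1)) / (r+1) := by
    rw [hμ, ← intervalIntegral.integral_of_le hba]
    exact integral_rpow (Or.inl (by linarith))
  have hI2 : ∫ t, t ^ (2*r) ∂μ = (a ^ (2*r+1) - b ^ (2*r+1)) / (2*r+1) := by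
    rw [hμ, ← intervalIntegral.integral_of_le hba]
    exact integral_rpow (Or.inl (by linarith))
  have hvol : ∫ t, (1:ℝ) ∂μ = a - b := by
    simp [hμ, hba, Real.volume_Ioc, ENNReal.toReal_ofReal (by linarith : (0:ℝ) ≤ a - b)]
  rw [hI1, hI2, hvol] at hH
  have h2nn : 0 ≤ (a ^ (2*r+1) - b ^ (2*r+1)) / (2*r+1) := by
    apply div_nonneg _ (by linarith)
    have := Real.rpow_le_rpow hb hba (by linarith : 0 ≤ 2*r+1)
    linarith
  have h1nn : 0 ≤ (a ^ (r+1) - b ^ (r+1)) / (r+1) := by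
    apply div_nonneg _ (by linarith)
    have := Real.rpow_le_rpow hb hba (by linarith : 0 ≤ r+1)
    linarith
  have habnn : (0:ℝ) ≤ a - b := by linarith
  calc ((a ^ (r+1) - b ^ (r+1)) / (r+1)) ^ 2
      ≤ (((a ^ (2*r+1) - b ^ (2*r+1)) / (2*r+1)) ^ ((1:ℝ)/2) * (a - b) ^ ((1:ℝ)/2)) ^ 2 := by
        apply pow_le_pow_left₀ h1nn hH
    _ = (a - b) * ((a ^ (2*r+1) - b ^ (2*r+1)) / (2*r+1)) := by
        rw [mul_pow, ← Real.rpow_natCast (_ ^ ((1:ℝ)/2)) 2, ← Real.rpow_natCast ((a-b) ^ ((1:ℝ)/2)) 2,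
          ← Real.rpow_mul h2nn, ← Real.rpow_mul habnn]
        norm_num
        ring

private lemma elem_aux13 {p a b : ℝ} (hp : 2 ≤ p) (hb : 0 ≤ b) (hba : b ≤ a) :
    4 * (p - 1) / p ^ 2 * (a ^ (p/2) - b ^ (p/2)) ^ 2 ≤ (a - b) * (a ^ (p-1) - b ^ (p-1)) := by
  have hp0 : (0:ℝ) < p := by linarith
  have hcs := cs_rpow13 hb hba (by linarith : (0:ℝ) ≤ p/2 - 1)
  rw [show p/2 - 1 + 1 = p/2 by ring, show 2*(p/2-1)+1 = p - 1 by ring] at hcs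
  have h := mul_le_mul_of_nonneg_left hcs (by linarith : (0:ℝ) ≤ p - 1)
  have hrw : (p-1) * (((a ^ (p/2) - b ^ (p/2)) / (p/2)) ^ 2)
      = 4 * (p - 1) / p ^ 2 * (a ^ (p/2) - b ^ (p/2)) ^ 2 := by
    field_simp
    ring
  have hrw2 : (p-1) * ((a - b) * ((a ^ (p-1) - b ^ (p-1)) / (p-1)))
      = (a - b) * (a ^ (p-1) - b ^ (p-1)) := by
    rw [mul_comm, mul_assoc, div_mul_cancel₀ _ (by linarith : p - 1 ≠ 0)]
  rw [hrw, hrw2] at h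
  exact h

private lemma elem_ineq13 {p a b : ℝ} (hp : 2 ≤ p) (ha : 0 ≤ a) (hb : 0 ≤ b) :
    4 * (p - 1) / p ^ 2 * (a ^ (p/2) - b ^ (p/2)) ^ 2 ≤ (a - b) * (a ^ (p-1) - b ^ (p-1)) := by
  rcases le_total b a with hba | hab
  · exact elem_aux13 hp hb hba
  · have := elem_aux13 hp ha hab
    nlinarith [this]

private lemma ker_aesm13 {J : ℝ → ℝ} (hJ : AEStronglyMeasurable J (volume : Measure ℝ)) :
    AEStronglyMeasurable (fun z : ℝ × ℝ => J (z.1 - z.2)) (volume.prod volume) :=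
  hJ.comp_quasiMeasurePreserving (quasiMeasurePreserving_sub volume volume)

private lemma ker_lint_fst13 {J : ℝ → ℝ} (hJ : AEStronglyMeasurable J (volume : Measure ℝ))
    (hJ_even : ∀ x, J (-x) = J x)
    {φ : ℝ → ℝ≥0∞} (hφ : AEMeasurable φ (volume : Measure ℝ)) :
    ∫⁻ z : ℝ × ℝ, (‖J (z.1 - z.2)‖₊ : ℝ≥0∞) * φ z.1 ∂(volume.prod volume)
      = (∫⁻ x, (‖J x‖₊ : ℝ≥0∞)) * ∫⁻ x, φ x := by
  have hJm : AEMeasurable (fun z : ℝ × ℝ => (‖J (z.1 - z.2)‖₊ : ℝ≥0∞)) (volume.prod volume) :=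
    (ker_aesm13 hJ).enorm
  have hφ1 : AEMeasurable (fun z : ℝ × ℝ => φ z.1) (volume.prod volume) :=
    hφ.comp_quasiMeasurePreserving Measure.quasiMeasurePreserving_fst
  rw [lintegral_prod (fun z : ℝ × ℝ => (‖J (z.1 - z.2)‖₊ : ℝ≥0∞) * φ z.1) (hJm.mul hφ1)]
  have hinner : ∀ x : ℝ, ∫⁻ y, (‖J (x - y)‖₊ : ℝ≥0∞) * φ x
      = (∫⁻ t, (‖J t‖₊ : ℝ≥0∞)) * φ x := by
    intro x
    have heq : ∀ y : ℝ, (‖J (x - y)‖₊ : ℝ≥0∞) = ‖J (y - x)‖₊ := fun y => by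
      rw [show x - y = -(y - x) by ring, hJ_even]
    simp_rw [heq]
    have hm : AEMeasurable (fun y : ℝ => (‖J (y - x)‖₊ : ℝ≥0∞)) (volume : Measure ℝ) :=
      hJ.enorm.comp_quasiMeasurePreserving
        (measurePreserving_sub_right volume x).quasiMeasurePreserving
    rw [lintegral_mul_const'' _ hm, lintegral_sub_right_eq_self (fun t => (‖J t‖₊ : ℝ≥0∞)) x]
  simp_rw [hinner]
  rw [lintegral_const_mul'' _ hφ]

private lemma ker_lint_snd13 {J : ℝ → ℝ} (hJ : AEStronglyMeasurable J (volume : Measure ℝ))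
    {φ : ℝ → ℝ≥0∞} (hφ : AEMeasurable φ (volume : Measure ℝ)) :
    ∫⁻ z : ℝ × ℝ, (‖J (z.1 - z.2)‖₊ : ℝ≥0∞) * φ z.2 ∂(volume.prod volume)
      = (∫⁻ x, (‖J x‖₊ : ℝ≥0∞)) * ∫⁻ x, φ x := by
  have hJm : AEMeasurable (fun z : ℝ × ℝ => (‖J (z.1 - z.2)‖₊ : ℝ≥0∞)) (volume.prod volume) :=
    (ker_aesm13 hJ).enorm
  have hφ2 : AEMeasurable (fun z : ℝ × ℝ => φ z.2) (volume.prod volume) :=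
    hφ.comp_quasiMeasurePreserving Measure.quasiMeasurePreserving_snd
  rw [lintegral_prod_symm (fun z : ℝ × ℝ => (‖J (z.1 - z.2)‖₊ : ℝ≥0∞) * φ z.2) (hJm.mul hφ2)]
  have hinner : ∀ y : ℝ, ∫⁻ x, (‖J (x - y)‖₊ : ℝ≥0∞) * φ y
      = (∫⁻ t, (‖J t‖₊ : ℝ≥0∞)) * φ y := by
    intro y
    have hm : AEMeasurable (fun x : ℝ => (‖J (x - y)‖₊ : ℝ≥0∞)) (volume : Measure ℝ) :=
      hJ.enorm.comp_quasiMeasurePreserving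
        (measurePreserving_sub_right volume y).quasiMeasurePreserving
    rw [lintegral_mul_const'' _ hm, lintegral_sub_right_eq_self (fun t => (‖J t‖₊ : ℝ≥0∞)) y]
  simp_rw [hinner]
  rw [lintegral_const_mul'' _ hφ]

private lemma ker_int_fst13 {J : ℝ → ℝ} (hJ : Integrable J (volume : Measure ℝ))
    (hJ_even : ∀ x, J (-x) = J x)
    {φ : ℝ → ℝ} (hφ : Integrable φ (volume : Measure ℝ)) :
    Integrable (fun z : ℝ × ℝ => J (z.1 - z.2) * φ z.1) (volume.prod volume) := by
  refine ⟨(ker_aesm13 hJ.1).mul hφ.1.comp_fst, ?_⟩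
  rw [hasFiniteIntegral_def]
  calc ∫⁻ z : ℝ × ℝ, (‖J (z.1 - z.2) * φ z.1‖₊ : ℝ≥0∞) ∂(volume.prod volume)
      = ∫⁻ z : ℝ × ℝ, (‖J (z.1 - z.2)‖₊ : ℝ≥0∞) * ‖φ z.1‖₊ ∂(volume.prod volume) :=
        lintegral_congr fun z => by rw [nnnorm_mul]; push_cast; ring
    _ = (∫⁻ x, (‖J x‖₊ : ℝ≥0∞)) * ∫⁻ x, (‖φ x‖₊ : ℝ≥0∞) :=
        ker_lint_fst13 hJ.1 hJ_even hφ.1.enorm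
    _ < ⊤ := ENNReal.mul_lt_top hJ.2 hφ.2

private lemma ker_int_snd13 {J : ℝ → ℝ} (hJ : Integrable J (volume : Measure ℝ))
    {φ : ℝ → ℝ} (hφ : Integrable φ (volume : Measure ℝ)) :
    Integrable (fun z : ℝ × ℝ => J (z.1 - z.2) * φ z.2) (volume.prod volume) := by
  refine ⟨(ker_aesm13 hJ.1).mul hφ.1.comp_snd, ?_⟩
  rw [hasFiniteIntegral_def]
  calc ∫⁻ z : ℝ × ℝ, (‖J (z.1 - z.2) * φ z.2‖₊ : ℝ≥0∞) ∂(volume.prod volume)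
      = ∫⁻ z : ℝ × ℝ, (‖J (z.1 - z.2)‖₊ : ℝ≥0∞) * ‖φ z.2‖₊ ∂(volume.prod volume) :=
        lintegral_congr fun z => by rw [nnnorm_mul]; push_cast; ring
    _ = (∫⁻ x, (‖J x‖₊ : ℝ≥0∞)) * ∫⁻ x, (‖φ x‖₊ : ℝ≥0∞) :=
        ker_lint_snd13 hJ.1 hφ.1.enorm
    _ < ⊤ := ENNReal.mul_lt_top hJ.2 hφ.2

private lemma memLp_lint_lt_top13 {g : ℝ → ℝ} {q : ℝ} (hq : 0 < q)
    (hg : MemLp g (ENNReal.ofReal q) (volume : Measure ℝ)) :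
    ∫⁻ x, (‖g x‖₊ : ℝ≥0∞) ^ q ∂(volume : Measure ℝ) < ⊤ := by
  have hne : ENNReal.ofReal q ≠ 0 := by
    simp only [ne_eq, ENNReal.ofReal_eq_zero, not_le]; exact hq
  have h2 := hg.2
  rw [eLpNorm_eq_lintegral_rpow_enorm_toReal hne (by simp), ENNReal.toReal_ofReal hq.le] at h2
  exact (ENNReal.rpow_lt_top_iff_of_pos (by positivity)).mp h2

private lemma ker_int_holder13 {J : ℝ → ℝ} (hJ : Integrable J (volume : Measure ℝ))
    (hJ_even : ∀ x, J (-x) = J x) {q q' : ℝ} (hq : q.HolderConjugate q')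
    {g h : ℝ → ℝ} (hg : MemLp g (ENNReal.ofReal q) (volume : Measure ℝ))
    (hh : MemLp h (ENNReal.ofReal q') (volume : Measure ℝ)) :
    Integrable (fun z : ℝ × ℝ => J (z.1 - z.2) * g z.1 * h z.2) (volume.prod volume) := by
  have hq0 : 0 < q := hq.pos
  have hq'0 : 0 < q' := hq.symm.pos
  refine ⟨((ker_aesm13 hJ.1).mul hg.1.comp_fst).mul hh.1.comp_snd, ?_⟩
  rw [hasFiniteIntegral_def]
  set N : ℝ × ℝ → ℝ≥0∞ := fun z => (‖J (z.1 - z.2)‖₊ : ℝ≥0∞) with hN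
  set f₁ : ℝ × ℝ → ℝ≥0∞ := fun z => N z ^ (1/q) * (‖g z.1‖₊ : ℝ≥0∞) with hf₁
  set f₂ : ℝ × ℝ → ℝ≥0∞ := fun z => N z ^ (1/q') * (‖h z.2‖₊ : ℝ≥0∞) with hf₂
  have hNm : AEMeasurable N (volume.prod volume) := (ker_aesm13 hJ.1).enorm
  have hgm : AEMeasurable (fun z : ℝ × ℝ => (‖g z.1‖₊ : ℝ≥0∞)) (volume.prod volume) :=
    hg.1.enorm.comp_quasiMeasurePreserving Measure.quasiMeasurePreserving_fst
  have hhm : AEMeasurable (fun z : ℝ × ℝ => (‖h z.2‖₊ : ℝ≥0∞)) (volume.prod volume) :=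
    hh.1.enorm.comp_quasiMeasurePreserving Measure.quasiMeasurePreserving_snd
  have hf₁m : AEMeasurable f₁ (volume.prod volume) := (hNm.pow_const _).mul hgm
  have hf₂m : AEMeasurable f₂ (volume.prod volume) := (hNm.pow_const _).mul hhm
  have hptw : ∀ z : ℝ × ℝ, (‖J (z.1 - z.2) * g z.1 * h z.2‖₊ : ℝ≥0∞) = (f₁ * f₂) z := by
    intro z
    simp only [hf₁, hf₂, hN, Pi.mul_apply, nnnorm_mul]
    push_cast
    rw [show (‖J (z.1-z.2)‖₊ : ℝ≥0∞) ^ (1/q) * (‖g z.1‖₊ : ℝ≥0∞) *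
        ((‖J (z.1-z.2)‖₊ : ℝ≥0∞) ^ (1/q') * (‖h z.2‖₊ : ℝ≥0∞))
        = ((‖J (z.1-z.2)‖₊ : ℝ≥0∞) ^ (1/q) * (‖J (z.1-z.2)‖₊ : ℝ≥0∞) ^ (1/q')) *
          ((‖g z.1‖₊ : ℝ≥0∞) * (‖h z.2‖₊ : ℝ≥0∞)) by ring]
    rw [← ENNReal.rpow_add_of_nonneg (1/q) (1/q') (by positivity) (by positivity)]
    rw [show 1/q + 1/q' = 1 by rw [one_div, one_div]; exact hq.inv_add_inv_eq_one]
    rw [ENNReal.rpow_one]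
    ring
  refine (lintegral_congr hptw).trans_lt ?_
  have hHold := ENNReal.lintegral_mul_le_Lp_mul_Lq (volume.prod volume) hq hf₁m hf₂m
  refine lt_of_le_of_lt hHold ?_
  have hint1 : ∫⁻ z : ℝ × ℝ, f₁ z ^ q ∂(volume.prod volume)
      = (∫⁻ x, (‖J x‖₊ : ℝ≥0∞)) * ∫⁻ x, (‖g x‖₊ : ℝ≥0∞) ^ q := by
    have hzz : ∀ z : ℝ × ℝ, f₁ z ^ q = N z * (‖g z.1‖₊ : ℝ≥0∞) ^ q := by
      intro z
      rw [hf₁, ENNReal.mul_rpow_of_nonneg _ _ hq0.le, ← ENNReal.rpow_mul,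
        one_div, inv_mul_cancel₀ hq0.ne', ENNReal.rpow_one]
    rw [lintegral_congr hzz]
    exact ker_lint_fst13 hJ.1 hJ_even (hg.1.enorm.pow_const q)
  have hint2 : ∫⁻ z : ℝ × ℝ, f₂ z ^ q' ∂(volume.prod volume)
      = (∫⁻ x, (‖J x‖₊ : ℝ≥0∞)) * ∫⁻ x, (‖h x‖₊ : ℝ≥0∞) ^ q' := by
    have hzz : ∀ z : ℝ × ℝ, f₂ z ^ q' = N z * (‖h z.2‖₊ : ℝ≥0∞) ^ q' := by
      intro z
      rw [hf₂, ENNReal.mul_rpow_of_nonneg _ _ hq'0.le, ← ENNReal.rpow_mul,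
        one_div, inv_mul_cancel₀ hq'0.ne', ENNReal.rpow_one]
    rw [lintegral_congr hzz]
    exact ker_lint_snd13 hJ.1 (hh.1.enorm.pow_const q')
  rw [hint1, hint2]
  have h1 : (∫⁻ x, (‖J x‖₊ : ℝ≥0∞)) * ∫⁻ x, (‖g x‖₊ : ℝ≥0∞) ^ q < ⊤ :=
    ENNReal.mul_lt_top hJ.2 (memLp_lint_lt_top13 hq0 hg)
  have h2 : (∫⁻ x, (‖J x‖₊ : ℝ≥0∞)) * ∫⁻ x, (‖h x‖₊ : ℝ≥0∞) ^ q' < ⊤ :=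
    ENNReal.mul_lt_top hJ.2 (memLp_lint_lt_top13 hq'0 hh)
  exact ENNReal.mul_lt_top (ENNReal.rpow_lt_top_of_nonneg (by positivity) h1.ne)
    (ENNReal.rpow_lt_top_of_nonneg (by positivity) h2.ne)

end AuxStmt13

/-- for `p ≥ 2` and nonnegative `u ∈ L² ∩ L^p`,
`∫ (J∗u − u) u^{p−1} ≤ −(2(p−1)/p²) ∬ J(x−y)(u(x)^{p/2} − u(y)^{p/2})²`. -/
theorem stmt13 (J : ℝ → ℝ) (hJ_nonneg : ∀ x, 0 ≤ J x) (hJ_even : ∀ x, J (-x) = J x)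
    (hJ_int : Integrable J) (hJ_mass : ∫ x : ℝ, J x = 1)
    (p : ℝ) (hp : 2 ≤ p)
    (u : ℝ → ℝ) (hu_nonneg : ∀ x, 0 ≤ u x)
    (hu_L2 : MemLp u 2 (volume : Measure ℝ))
    (hu_Lp : MemLp u (ENNReal.ofReal p) (volume : Measure ℝ)) :
    ∫ x : ℝ, ((∫ y : ℝ, J (x - y) * u y) - u x) * (u x) ^ (p - 1) ≤
      -(2 * (p - 1) / p ^ 2) *
        ∫ x : ℝ, ∫ y : ℝ, J (x - y) * ((u x) ^ (p / 2) - (u y) ^ (p / 2)) ^ 2 := by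
  have hp0 : (0:ℝ) < p := by linarith
  have hp1 : (0:ℝ) < p - 1 := by linarith
  -- basic even rewriting on kernel
  have hJe : ∀ x y : ℝ, J (x - y) = J (y - x) := fun x y => by
    rw [show x - y = -(y - x) by ring, hJ_even]
  -- MemLp facts
  have hG_Lq : MemLp (fun x => u x ^ (p-1)) (ENNReal.ofReal (p/(p-1))) (volume : Measure ℝ) := by
    have h := hu_Lp.norm_rpow_div (ENNReal.ofReal (p-1))
    rw [ENNReal.toReal_ofReal hp1.le, ← ENNReal.ofReal_div_of_pos hp1] at h
    refine (memLp_congr_ae (ae_of_all _ fun x => ?_)).mp h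
    rw [Real.norm_of_nonneg (hu_nonneg x)]
  have hF_L2 : MemLp (fun x => u x ^ (p/2)) (ENNReal.ofReal 2) (volume : Measure ℝ) := by
    have h := hu_Lp.norm_rpow_div (ENNReal.ofReal (p/2))
    rw [ENNReal.toReal_ofReal (by linarith : (0:ℝ) ≤ p/2),
      ← ENNReal.ofReal_div_of_pos (by linarith : (0:ℝ) < p/2),
      show p / (p/2) = 2 by field_simp] at h
    refine (memLp_congr_ae (ae_of_all _ fun x => ?_)).mp h
    rw [Real.norm_of_nonneg (hu_nonneg x)]
  have hup_int : Integrable (fun x => u x ^ p) (volume : Measure ℝ) := by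
    have h := hu_Lp.integrable_norm_rpow
      (by simp only [ne_eq, ENNReal.ofReal_eq_zero, not_le]; linarith) (by simp)
    rw [ENNReal.toReal_ofReal hp0.le] at h
    exact h.congr (ae_of_all _ fun x => by
      simp only []; rw [Real.norm_of_nonneg (hu_nonneg x)])
  have hpq : (p/(p-1)).HolderConjugate p := by
    rw [Real.holderConjugate_iff]
    constructor
    · rw [lt_div_iff₀ hp1]; linarith
    · field_simp; ring
  have h22 : (2:ℝ).HolderConjugate 2 := Real.HolderConjugate.two_two
  have hupx : ∀ x : ℝ, u x ^ p = u x * u x ^ (p-1) := by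
    intro x
    have hne : (1:ℝ) + (p-1) ≠ 0 := by
      rw [show (1:ℝ) + (p-1) = p by ring]; exact hp0.ne'
    calc u x ^ p = u x ^ ((1:ℝ) + (p-1)) := by congr 1; ring
      _ = u x ^ (1:ℝ) * u x ^ (p-1) := Real.rpow_add' (hu_nonneg x) hne
      _ = u x * u x ^ (p-1) := by rw [Real.rpow_one]
  have hhalf : ∀ x : ℝ, u x ^ (p/2) * u x ^ (p/2) = u x ^ p := by
    intro x
    have hne : p/2 + p/2 ≠ 0 := by
      rw [show p/2 + p/2 = p by ring]; exact hp0.ne'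
    calc u x ^ (p/2) * u x ^ (p/2) = u x ^ (p/2 + p/2) :=
          (Real.rpow_add' (hu_nonneg x) hne).symm
      _ = u x ^ p := by congr 1; ring
  -- integrability on the product space
  have hA_int : Integrable (fun z : ℝ × ℝ => J (z.1 - z.2) * u z.1 ^ (p-1) * u z.2)
      (volume.prod volume) := ker_int_holder13 hJ_int hJ_even hpq hG_Lq hu_Lp
  have hA'_int : Integrable (fun z : ℝ × ℝ => J (z.1 - z.2) * u z.1 * u z.2 ^ (p-1))
      (volume.prod volume) := ker_int_holder13 hJ_int hJ_even hpq.symm hu_Lp hG_Lq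
  have hK_int : Integrable (fun z : ℝ × ℝ => J (z.1 - z.2) * u z.1 ^ (p/2) * u z.2 ^ (p/2))
      (volume.prod volume) := ker_int_holder13 hJ_int hJ_even h22 hF_L2 hF_L2
  have hP1_int : Integrable (fun z : ℝ × ℝ => J (z.1 - z.2) * u z.1 ^ p)
      (volume.prod volume) := ker_int_fst13 hJ_int hJ_even hup_int
  have hP2_int : Integrable (fun z : ℝ × ℝ => J (z.1 - z.2) * u z.2 ^ p)
      (volume.prod volume) := ker_int_snd13 hJ_int hup_int
  -- abbreviations
  set P : ℝ := ∫ x, u x ^ p with hPdef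
  set A : ℝ := ∫ z : ℝ × ℝ, J (z.1 - z.2) * u z.1 ^ (p-1) * u z.2 ∂(volume.prod volume) with hAdef
  set K : ℝ := ∫ z : ℝ × ℝ, J (z.1 - z.2) * u z.1 ^ (p/2) * u z.2 ^ (p/2) ∂(volume.prod volume)
    with hKdef
  -- value of the ∫∫ J(x-y) u(x)^p
  have vP1 : ∫ z : ℝ × ℝ, J (z.1 - z.2) * u z.1 ^ p ∂(volume.prod volume) = P := by
    rw [integral_prod _ hP1_int]
    rw [hPdef]
    refine integral_congr_ae (ae_of_all _ fun x => ?_)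
    show (∫ y : ℝ, J (x - y) * u x ^ p) = u x ^ p
    have h1 : ∫ y, J (x - y) * u x ^ p = (∫ y, J (x - y)) * u x ^ p := integral_mul_const _ _
    have h2 : ∫ y : ℝ, J (x - y) = 1 := by
      have : ∀ y : ℝ, J (x - y) = J (y - x) := fun y => hJe x y
      simp_rw [this]
      rw [integral_sub_right_eq_self J x]
      exact hJ_mass
    rw [h1, h2, one_mul]
  have vP2 : ∫ z : ℝ × ℝ, J (z.1 - z.2) * u z.2 ^ p ∂(volume.prod volume) = P := by
    have hswap := integral_prod_swap (fun z : ℝ × ℝ => J (z.1 - z.2) * u z.1 ^ p)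
      (μ := (volume : Measure ℝ)) (ν := (volume : Measure ℝ))
    calc ∫ z : ℝ × ℝ, J (z.1 - z.2) * u z.2 ^ p ∂(volume.prod volume)
        = ∫ z : ℝ × ℝ, J (z.2 - z.1) * u z.2 ^ p ∂(volume.prod volume) := by
          refine integral_congr_ae (ae_of_all _ fun z => ?_)
          show J (z.1 - z.2) * u z.2 ^ p = J (z.2 - z.1) * u z.2 ^ p
          rw [hJe z.1 z.2]
      _ = P := by
          rw [show (fun z : ℝ × ℝ => J (z.2 - z.1) * u z.2 ^ p)
            = (fun z : ℝ × ℝ => (fun w : ℝ × ℝ => J (w.1 - w.2) * u w.1 ^ p) z.swap) from rfl]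
          rw [hswap, vP1]
  have vA' : ∫ z : ℝ × ℝ, J (z.1 - z.2) * u z.1 * u z.2 ^ (p-1) ∂(volume.prod volume) = A := by
    have hswap := integral_prod_swap (fun z : ℝ × ℝ => J (z.1 - z.2) * u z.1 ^ (p-1) * u z.2)
      (μ := (volume : Measure ℝ)) (ν := (volume : Measure ℝ))
    calc ∫ z : ℝ × ℝ, J (z.1 - z.2) * u z.1 * u z.2 ^ (p-1) ∂(volume.prod volume)
        = ∫ z : ℝ × ℝ, J (z.2 - z.1) * u z.2 ^ (p-1) * u z.1 ∂(volume.prod volume) := by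
          refine integral_congr_ae (ae_of_all _ fun z => ?_)
          show J (z.1 - z.2) * u z.1 * u z.2 ^ (p-1)
            = J (z.2 - z.1) * u z.2 ^ (p-1) * u z.1
          rw [hJe z.1 z.2]; ring
      _ = A := by
          rw [show (fun z : ℝ × ℝ => J (z.2 - z.1) * u z.2 ^ (p-1) * u z.1)
            = (fun z : ℝ × ℝ =>
                (fun w : ℝ × ℝ => J (w.1 - w.2) * u w.1 ^ (p-1) * u w.2) z.swap) from rfl]
          rw [hswap, hAdef]
  -- the squared-difference integrand
  have hSfun : (fun z : ℝ × ℝ => J (z.1 - z.2) * (u z.1 ^ (p/2) - u z.2 ^ (p/2)) ^ 2)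
      = fun z : ℝ × ℝ => (J (z.1 - z.2) * u z.1 ^ p + J (z.1 - z.2) * u z.2 ^ p)
          - 2 * (J (z.1 - z.2) * u z.1 ^ (p/2) * u z.2 ^ (p/2)) := by
    funext z
    have h1 := hhalf z.1
    have h2 := hhalf z.2
    have hexp : (u z.1 ^ (p/2) - u z.2 ^ (p/2)) ^ 2
        = u z.1 ^ p + u z.2 ^ p - 2 * (u z.1 ^ (p/2) * u z.2 ^ (p/2)) := by
      rw [← h1, ← h2]; ring
    rw [hexp]; ring
  have hS_int : Integrable
      (fun z : ℝ × ℝ => J (z.1 - z.2) * (u z.1 ^ (p/2) - u z.2 ^ (p/2)) ^ 2)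
      (volume.prod volume) := by
    rw [hSfun]
    exact (hP1_int.add hP2_int).sub (hK_int.const_mul 2)
  set S : ℝ := ∫ z : ℝ × ℝ, J (z.1 - z.2) * (u z.1 ^ (p/2) - u z.2 ^ (p/2)) ^ 2
    ∂(volume.prod volume) with hSdef
  have hsum1 : Integrable (fun z : ℝ × ℝ =>
      J (z.1 - z.2) * u z.1 ^ p + J (z.1 - z.2) * u z.2 ^ p) (volume.prod volume) :=
    hP1_int.add hP2_int
  have h2K : Integrable (fun z : ℝ × ℝ =>
      2 * (J (z.1 - z.2) * u z.1 ^ (p/2) * u z.2 ^ (p/2))) (volume.prod volume) :=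
    hK_int.const_mul 2
  have vS : S = 2 * P - 2 * K := by
    rw [hSdef, hSfun, integral_sub hsum1 h2K,
      integral_add hP1_int hP2_int, integral_const_mul, vP1, vP2, hKdef]
    ring
  -- the symmetrized product integrand
  have hDfun : (fun z : ℝ × ℝ =>
        J (z.1 - z.2) * ((u z.1 - u z.2) * (u z.1 ^ (p-1) - u z.2 ^ (p-1))))
      = fun z : ℝ × ℝ => (J (z.1 - z.2) * u z.1 ^ p + J (z.1 - z.2) * u z.2 ^ p)
          - (J (z.1 - z.2) * u z.1 ^ (p-1) * u z.2 + J (z.1 - z.2) * u z.1 * u z.2 ^ (p-1)) := by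
    funext z
    have h1 := hupx z.1
    have h2 := hupx z.2
    rw [h1, h2]; ring
  have hD_int : Integrable (fun z : ℝ × ℝ =>
      J (z.1 - z.2) * ((u z.1 - u z.2) * (u z.1 ^ (p-1) - u z.2 ^ (p-1))))
      (volume.prod volume) := by
    rw [hDfun]
    exact (hP1_int.add hP2_int).sub (hA_int.add hA'_int)
  have hsum2 : Integrable (fun z : ℝ × ℝ =>
      J (z.1 - z.2) * u z.1 ^ (p-1) * u z.2 + J (z.1 - z.2) * u z.1 * u z.2 ^ (p-1))
      (volume.prod volume) := hA_int.add hA'_int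
  have vD : ∫ z : ℝ × ℝ, J (z.1 - z.2) * ((u z.1 - u z.2) * (u z.1 ^ (p-1) - u z.2 ^ (p-1)))
      ∂(volume.prod volume) = 2 * P - 2 * A := by
    rw [hDfun, integral_sub hsum1 hsum2,
      integral_add hP1_int hP2_int, integral_add hA_int hA'_int, vP1, vP2, vA', hAdef]
    ring
  -- pointwise inequality
  have hptw : ∀ z : ℝ × ℝ,
      (4 * (p-1) / p ^ 2) * (J (z.1 - z.2) * (u z.1 ^ (p/2) - u z.2 ^ (p/2)) ^ 2)
        ≤ J (z.1 - z.2) * ((u z.1 - u z.2) * (u z.1 ^ (p-1) - u z.2 ^ (p-1))) := by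
    intro z
    have helem := elem_ineq13 hp (hu_nonneg z.1) (hu_nonneg z.2)
    have hJ0 := hJ_nonneg (z.1 - z.2)
    calc (4 * (p-1) / p ^ 2) * (J (z.1 - z.2) * (u z.1 ^ (p/2) - u z.2 ^ (p/2)) ^ 2)
        = J (z.1 - z.2) * (4 * (p-1) / p ^ 2 * (u z.1 ^ (p/2) - u z.2 ^ (p/2)) ^ 2) := by ring
      _ ≤ J (z.1 - z.2) * ((u z.1 - u z.2) * (u z.1 ^ (p-1) - u z.2 ^ (p-1))) :=
          mul_le_mul_of_nonneg_left helem hJ0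
  have hmono := integral_mono (hS_int.const_mul (4 * (p-1) / p ^ 2)) hD_int hptw
  rw [integral_const_mul, ← hSdef, vD] at hmono
  -- rewrite the left-hand side of the goal
  have hAA_int : Integrable (fun z : ℝ × ℝ => J (z.1 - z.2) * u z.2 * u z.1 ^ (p-1))
      (volume.prod volume) := by
    have : (fun z : ℝ × ℝ => J (z.1 - z.2) * u z.2 * u z.1 ^ (p-1))
        = fun z : ℝ × ℝ => J (z.1 - z.2) * u z.1 ^ (p-1) * u z.2 := by funext z; ring
    rw [this]; exact hA_int
  have hLHS : ∫ x : ℝ, ((∫ y : ℝ, J (x - y) * u y) - u x) * u x ^ (p - 1) = A - P := by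
    have hsplit : ∀ x : ℝ, ((∫ y : ℝ, J (x - y) * u y) - u x) * u x ^ (p-1)
        = (∫ y : ℝ, J (x - y) * u y * u x ^ (p-1)) - u x ^ p := by
      intro x
      rw [sub_mul]
      congr 1
      · exact (integral_mul_const _ _).symm
      · rw [hupx x]
    rw [integral_congr_ae (ae_of_all _ hsplit)]
    have hconv_int : Integrable (fun x : ℝ => ∫ y : ℝ, J (x - y) * u y * u x ^ (p-1))
        (volume : Measure ℝ) := hAA_int.integral_prod_left
    rw [integral_sub hconv_int hup_int]
    congr 1
    rw [integral_integral hAA_int]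
    rw [show ∫ z : ℝ × ℝ, J (z.1 - z.2) * u z.2 * u z.1 ^ (p-1) ∂(volume.prod volume)
      = A from by
        rw [hAdef]
        refine integral_congr_ae (ae_of_all _ fun z => ?_)
        show J (z.1 - z.2) * u z.2 * u z.1 ^ (p-1) = J (z.1 - z.2) * u z.1 ^ (p-1) * u z.2
        ring]
  have hRHS : ∫ x : ℝ, ∫ y : ℝ, J (x - y) * (u x ^ (p/2) - u y ^ (p/2)) ^ 2 = S := by
    rw [hSdef]
    exact integral_integral
      (f := fun x y => J (x - y) * (u x ^ (p/2) - u y ^ (p/2)) ^ 2) hS_int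
  rw [hLHS, hRHS]
  have hc : -(2 * (p - 1) / p ^ 2) * S = -(4 * (p-1) / p ^ 2 * S) / 2 := by ring
  rw [hc]
  linarith [hmono]
end
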